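/- Let F : D → ℝⁿ be C¹ on an open convex set D ⊆ ℝⁿ such that ⟨dF_x(y), y⟩ > 0 for all x ∈ D and all nonzero y ∈ ℝⁿ. Then F is injective on D. -/

import Mathlib

open RealInnerProductSpace

/-- Gale–Nikaidô criterion: a `C¹` map `F` on an open convex set `D ⊆ ℝⁿ`
whose differential is positive definite at every point of `D` is injective
on `D`. -/
theorem stmt_11 (n : ℕ) (F : EuclideanSpace ℝ (Fin n) → EuclideanSpace ℝ (Fin n))
    (D : Set (EuclideanSpace ℝ (Fin n))) (hD : IsOpen D) (hDconv : Convex ℝ D)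
    (hF : ContDiffOn ℝ 1 F D)
    (hpos : ∀ x ∈ D, ∀ v : EuclideanSpace ℝ (Fin n), v ≠ 0 →
      0 < ⟪fderiv ℝ F x v, v⟫) :
    Set.InjOn F D := by
  intro a ha b hb hab
  by_contra hne
  set v := b - a with hv
  have hvne : v ≠ 0 := sub_ne_zero.mpr (Ne.symm hne)
  -- points on the segment
  have hseg : ∀ t : ℝ, t ∈ Set.Icc (0:ℝ) 1 → a + t • v ∈ D := by
    intro t ht
    have : a + t • v = (1 - t) • a + t • b := by
      simp only [hv, smul_sub]
      module
    rw [this]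
    exact hDconv ha hb (by linarith [ht.1, ht.2]) ht.1 (by linarith [ht.2])
  set φ : ℝ → ℝ := fun t => ⟪v, F (a + t • v) - F a⟫ with hφ
  have hderiv : ∀ t : ℝ, a + t • v ∈ D →
      HasDerivAt φ ⟪v, fderiv ℝ F (a + t • v) v⟫ t := by
    intro t ht
    have hdF : DifferentiableAt ℝ F (a + t • v) := by
      have := (hF.differentiableOn one_ne_zero) (a + t • v) ht
      exact this.differentiableAt (hD.mem_nhds ht)
    have hline : HasDerivAt (fun s : ℝ => a + s • v) v t := by
      simpa using ((hasDerivAt_id t).smul_const v).const_add a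
    have hcomp : HasDerivAt (fun s : ℝ => F (a + s • v))
        (fderiv ℝ F (a + t • v) v) t :=
      (hdF.hasFDerivAt.comp_hasDerivAt t hline)
    have hsub : HasDerivAt (fun s : ℝ => F (a + s • v) - F a)
        (fderiv ℝ F (a + t • v) v) t := hcomp.sub_const (F a)
    have := (innerSL ℝ v).hasFDerivAt.comp_hasDerivAt t hsub
    exact this
  have hcont : ContinuousOn φ (Set.Icc 0 1) := by
    apply ContinuousOn.inner continuousOn_const
    apply ContinuousOn.sub _ continuousOn_const
    exact (hF.continuousOn.comp (by fun_prop) hseg)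
  have hmono : StrictMonoOn φ (Set.Icc 0 1) := by
    apply strictMonoOn_of_deriv_pos (convex_Icc 0 1) hcont
    intro t ht
    rw [interior_Icc] at ht
    have htD : a + t • v ∈ D := hseg t ⟨le_of_lt ht.1, le_of_lt ht.2⟩
    rw [(hderiv t htD).deriv]
    rw [real_inner_comm]
    exact hpos _ htD v hvne
  have h0 : φ 0 = 0 := by simp [hφ]
  have h1 : φ 1 = 0 := by
    simp [hφ, hv, hab]
  have := hmono (Set.left_mem_Icc.mpr zero_le_one) (Set.right_mem_Icc.mpr zero_le_one)
    zero_lt_one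
  rw [h0, h1] at this
  exact lt_irrefl 0 this
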